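/- A 3-regular graph G is graceful 5-colorable if and only if G is distance-two 4-colorable, i.e., χ(G²) ≤ 4. -/

import Mathlib

open SimpleGraph

/-- A graceful coloring: proper, and differences at each vertex pairwise distinct. -/
def IsGraceful {V : Type*} (G : SimpleGraph V) (f : V → ℕ) : Prop :=
  (∀ ⦃u v⦄, G.Adj u v → f u ≠ f v) ∧
  ∀ ⦃v u w⦄, G.Adj v u → G.Adj v w → u ≠ w →
    ((f v : ℤ) - f u).natAbs ≠ ((f v : ℤ) - f w).natAbs

/-- A graceful `k`-coloring: graceful with colors in `{1,…,k}`. -/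
def IsGracefulK {V : Type*} (G : SimpleGraph V) (k : ℕ) (f : V → ℕ) : Prop :=
  IsGraceful G f ∧ ∀ v, f v ∈ Finset.Icc 1 k

/-- The graceful chromatic number. -/
noncomputable def gracefulChromatic {V : Type*} (G : SimpleGraph V) : ℕ :=
  sInf {k | ∃ f : V → ℕ, IsGracefulK G k f}

/-- The square of a graph: vertices adjacent iff at distance at most 2. -/
def squareGraph {V : Type*} (G : SimpleGraph V) : SimpleGraph V where
  Adj u v := u ≠ v ∧ (G.Adj u v ∨ ∃ w, G.Adj u w ∧ G.Adj w v)
  symm := by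
    constructor
    rintro u v ⟨hne, h | ⟨w, h1, h2⟩⟩
    · exact ⟨hne.symm, Or.inl h.symm⟩
    · exact ⟨hne.symm, Or.inr ⟨w, h2.symm, h1.symm⟩⟩
  loopless := by constructor; rintro u ⟨hne, -⟩; exact hne rfl

/-- A set of naturals is AP-free: no three distinct elements `i, j, l` with `|i-j| = |j-l|`. -/
def APFree (S : Finset ℕ) : Prop :=
  ∀ i ∈ S, ∀ j ∈ S, ∀ l ∈ S, i ≠ j → j ≠ l → i ≠ l →
    ((i : ℤ) - j).natAbs ≠ ((j : ℤ) - l).natAbs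

/-- OEIS A065825: least `k` such that `{1,…,k}` contains an AP-free `n`-element subset. -/
noncomputable def A (n : ℕ) : ℕ :=
  sInf {k | ∃ S ⊆ Finset.Icc 1 k, S.card = n ∧ APFree S}

theorem stmt14 {V : Type*} [Fintype V] (G : SimpleGraph V) [DecidableRel G.Adj]
    (hreg : G.IsRegularOfDegree 3) :
    (∃ f : V → ℕ, IsGracefulK G 5 f) ↔
      ∃ f : V → ℕ, (∀ v, f v ∈ Finset.Icc 1 4) ∧
        ∀ u v : V, u ≠ v → (G.Adj u v ∨ ∃ w, G.Adj u w ∧ G.Adj w v) → f u ≠ f v := by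
  classical
  constructor
  · rintro ⟨f, ⟨hprop, hgrace⟩, hrange⟩
    have h3 : ∀ v, f v ≠ 3 := by
      intro v hv3
      have hdeg := hreg v
      rw [← SimpleGraph.card_neighborFinset_eq_degree] at hdeg
      obtain ⟨a, b, c, hab, hac, hbc, hset⟩ := Finset.card_eq_three.mp hdeg
      have ha : G.Adj v a := by rw [← SimpleGraph.mem_neighborFinset, hset]; simp
      have hb : G.Adj v b := by rw [← SimpleGraph.mem_neighborFinset, hset]; simp
      have hc : G.Adj v c := by rw [← SimpleGraph.mem_neighborFinset, hset]; simp
      have d1 := hgrace ha hb hab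
      have d2 := hgrace ha hc hac
      have d3 := hgrace hb hc hbc
      have pa := hprop ha
      have pb := hprop hb
      have pc := hprop hc
      have ra := Finset.mem_Icc.mp (hrange a)
      have rb := Finset.mem_Icc.mp (hrange b)
      have rc := Finset.mem_Icc.mp (hrange c)
      omega
    refine ⟨fun v => if f v ≤ 2 then f v else f v - 1, ?_, ?_⟩
    · intro v
      have := Finset.mem_Icc.mp (hrange v)
      have := h3 v
      simp only [Finset.mem_Icc]
      split <;> omega
    · intro u v huv h
      have hfuv : f u ≠ f v := by
        rcases h with h | ⟨w, h1, h2⟩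
        · exact hprop h
        · intro he
          exact hgrace h1.symm h2 huv (by rw [he])
      have := Finset.mem_Icc.mp (hrange u)
      have := Finset.mem_Icc.mp (hrange v)
      have := h3 u
      have := h3 v
      simp only
      split <;> split <;> omega
  · rintro ⟨f, hrange, hcol⟩
    refine ⟨fun v => if f v ≤ 2 then f v else f v + 1, ⟨⟨?_, ?_⟩, ?_⟩⟩
    · intro u v huv
      have hne : f u ≠ f v := hcol u v (G.ne_of_adj huv) (Or.inl huv)
      have := Finset.mem_Icc.mp (hrange u)
      have := Finset.mem_Icc.mp (hrange v)
      simp only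
      split <;> split <;> omega
    · intro v u w hvu hvw huw
      have h1 : f u ≠ f v := hcol u v (G.ne_of_adj hvu.symm) (Or.inl hvu.symm)
      have h2 : f w ≠ f v := hcol w v (G.ne_of_adj hvw.symm) (Or.inl hvw.symm)
      have h3 : f u ≠ f w := hcol u w huw (Or.inr ⟨v, hvu.symm, hvw⟩)
      have := Finset.mem_Icc.mp (hrange u)
      have := Finset.mem_Icc.mp (hrange v)
      have := Finset.mem_Icc.mp (hrange w)
      simp only
      split <;> split <;> split <;> omega
    · intro v
      have := Finset.mem_Icc.mp (hrange v)
      simp only [Finset.mem_Icc]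
      split <;> omega
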